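/- Let Ω and Θ be finite sets with |Ω| ≥ 3, |Θ| ≥ 2, and |Ω| ≥ |Θ|, and let φ : Δ(Ω×Θ) → Δ(Ω×Θ) satisfy positivity, continuity, weak signal coherence, and marginality. Then there exists ψ : Ω → ℝ₊₊ such that for all p ∈ Δ(Ω×Θ) and all (ω,θ) ∈ Ω×Θ, φ(p)(ω,θ) = ψ(ω)·p(ω,θ) / Σ_{ω',θ'} ψ(ω')·p(ω',θ'). -/

import Mathlib

open Finset

/-- `p` is a probability distribution on the finite set `α`. -/
def IsDist {α : Type*} [Fintype α] (p : α → ℝ) : Prop :=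
  (∀ a, 0 ≤ p a) ∧ ∑ a, p a = 1

/-- The conditional `p(·|θ)` of a joint distribution `p ∈ Δ(Ω×Θ)` given signal `θ`. -/
noncomputable def condSignal {Ω Θ : Type*} [Fintype Ω] [DecidableEq Θ]
    (p : Ω × Θ → ℝ) (θ : Θ) : Ω × Θ → ℝ :=
  fun x => if x.2 = θ then p x / ∑ ω, p (ω, θ) else 0

/-- `φ` is positive: `φ(p)(A) = 0` iff `p(A) = 0` for every event `A ⊆ Ω×Θ`. -/
def PositiveJoint {Ω Θ : Type*} [Fintype Ω] [Fintype Θ]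
    (φ : (Ω × Θ → ℝ) → Ω × Θ → ℝ) : Prop :=
  ∀ p, IsDist p → ∀ A : Finset (Ω × Θ), (∑ x ∈ A, φ p x = 0 ↔ ∑ x ∈ A, p x = 0)

/-- `φ` is weakly signal coherent: for every `θ` with `p(θ) > 0`,
`φ(p(·|θ)) = φ(p)(·|θ)`. -/
def WeakSignalCoherent {Ω Θ : Type*} [Fintype Ω] [Fintype Θ] [DecidableEq Θ]
    (φ : (Ω × Θ → ℝ) → Ω × Θ → ℝ) : Prop :=
  ∀ p, IsDist p → ∀ θ : Θ, 0 < ∑ ω, p (ω, θ) →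
    φ (condSignal p θ) = condSignal (φ p) θ

/-- `φ` satisfies marginality: distributions with equal `Ω`-marginals are mapped to
distributions with equal `Ω`-marginals. -/
def Marginality {Ω Θ : Type*} [Fintype Ω] [Fintype Θ]
    (φ : (Ω × Θ → ℝ) → Ω × Θ → ℝ) : Prop :=
  ∀ p p', IsDist p → IsDist p' →
    (∀ ω : Ω, ∑ θ, p (ω, θ) = ∑ θ, p' (ω, θ)) →
    ∀ ω : Ω, ∑ θ, φ p (ω, θ) = ∑ θ, φ p' (ω, θ)

section Util
variable {α : Type*} [Fintype α] [DecidableEq α]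

lemma sum_ite1 (i : α) (f : ℝ) : ∑ a, (if a = i then f else 0) = f := by
  simp

lemma sum_ite2 {i j : α} (h : i ≠ j) (f g : ℝ) :
    ∑ a, (if a = i then f else if a = j then g else 0) = f + g := by
  rw [show (fun a => if a = i then f else if a = j then g else 0)
      = (fun a => (if a = i then f else 0) + (if a = j then g else 0)) from ?_]
  · rw [Finset.sum_add_distrib]; simp
  · funext a
    by_cases h1 : a = i <;> by_cases h2 : a = j <;> simp_all

lemma sum_ite3 {i j k : α} (hij : i ≠ j) (hik : i ≠ k) (hjk : j ≠ k) (f g h : ℝ) :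
    ∑ a, (if a = i then f else if a = j then g else if a = k then h else 0) = f + g + h := by
  rw [show (fun a => if a = i then f else if a = j then g else if a = k then h else 0)
      = (fun a => (if a = i then f else 0) + (if a = j then g else 0) + (if a = k then h else 0)) from ?_]
  · rw [Finset.sum_add_distrib, Finset.sum_add_distrib]; simp
  · funext a
    by_cases h1 : a = i <;> by_cases h2 : a = j <;> by_cases h3 : a = k <;> simp_all

end Util

set_option linter.unusedSectionVars false
section Core
variable {Ω Θ : Type*} [Fintype Ω] [Fintype Θ] [DecidableEq Ω] [DecidableEq Θ]

/-- Embedding of a distribution on `Ω` at signal `θ0`. -/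
def emb (θ0 : Θ) (q : Ω → ℝ) : Ω × Θ → ℝ := fun x => if x.2 = θ0 then q x.1 else 0

/-- Edge distribution: mass `x` at `i`, mass `1-x` at `j`. -/
def edge (x : ℝ) (i j : Ω) : Ω → ℝ := fun ω => if ω = i then x else if ω = j then 1 - x else 0

variable {φ : (Ω × Θ → ℝ) → Ω × Θ → ℝ}

/-- The induced map on distributions over `Ω`. -/
noncomputable def Fm (φ : (Ω × Θ → ℝ) → Ω × Θ → ℝ) (θ0 : Θ) (q : Ω → ℝ) : Ω → ℝ :=
  fun ω => φ (emb θ0 q) (ω, θ0)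

lemma sum_emb (θ0 : Θ) (q : Ω → ℝ) : ∑ x : Ω × Θ, emb θ0 q x = ∑ ω, q ω := by
  rw [Fintype.sum_prod_type]
  simp [emb]

lemma isDist_emb (θ0 : Θ) {q : Ω → ℝ} (hq : IsDist q) : IsDist (emb θ0 q) := by
  constructor
  · intro x; unfold emb; split
    · exact hq.1 x.1
    · exact le_refl 0
  · rw [show ∑ a : Ω × Θ, emb θ0 q a = ∑ ω, q ω from sum_emb θ0 q]; exact hq.2

lemma edge_sum {i j : Ω} (h : i ≠ j) (x : ℝ) : ∑ ω, edge x i j ω = 1 := by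
  unfold edge; rw [sum_ite2 h]; ring

lemma isDist_edge {i j : Ω} (h : i ≠ j) {x : ℝ} (hx0 : 0 ≤ x) (hx1 : x ≤ 1) :
    IsDist (edge x i j) := by
  refine ⟨fun ω => ?_, edge_sum h x⟩
  unfold edge; split
  · exact hx0
  · split
    · linarith
    · exact le_refl 0

end Core
section Core2
set_option linter.unusedSectionVars false
variable {Ω Θ : Type*} [Fintype Ω] [Fintype Θ] [DecidableEq Ω] [DecidableEq Θ]
variable {φ : (Ω × Θ → ℝ) → Ω × Θ → ℝ}
variable (hmap : ∀ p, IsDist p → IsDist (φ p)) (hpos : PositiveJoint φ)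
variable (hcoh : WeakSignalCoherent φ) (hmarg : Marginality φ)
include hmap hpos hcoh hmarg

/-- pointwise positivity transfer -/
lemma phi_zero {p : Ω × Θ → ℝ} (hp : IsDist p) {x : Ω × Θ} (hx : p x = 0) : φ p x = 0 := by
  have := hpos p hp {x}
  simp only [Finset.sum_singleton] at this
  exact this.mpr hx

lemma phi_event_pos {p : Ω × Θ → ℝ} (hp : IsDist p) (A : Finset (Ω × Θ))
    (hA : ∑ x ∈ A, p x ≠ 0) : 0 < ∑ x ∈ A, φ p x := by
  have hne : ∑ x ∈ A, φ p x ≠ 0 := fun h => hA ((hpos p hp A).mp h)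
  have hnn : 0 ≤ ∑ x ∈ A, φ p x := Finset.sum_nonneg fun x _ => (hmap p hp).1 x
  exact lt_of_le_of_ne hnn (Ne.symm hne)

lemma condSignal_emb (θ0 : Θ) {q : Ω → ℝ} (hq : IsDist q) :
    condSignal (emb θ0 q) θ0 = emb θ0 q := by
  funext x
  obtain ⟨ω, θ⟩ := x
  simp only [condSignal, emb]
  by_cases h : θ = θ0 <;> simp [h, hq.2]

lemma phi_emb (θ0 : Θ) {q : Ω → ℝ} (hq : IsDist q) :
    φ (emb θ0 q) = emb θ0 (Fm φ θ0 q) := by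
  have hd : IsDist (emb θ0 q) := isDist_emb θ0 hq
  have hθ : 0 < ∑ ω, emb θ0 q (ω, θ0) := by
    have h1 : ∑ ω, emb θ0 q (ω, θ0) = 1 := by simp [emb, hq.2]
    rw [h1]; norm_num
  have h := hcoh (emb θ0 q) hd θ0 hθ
  rw [condSignal_emb hmap hpos hcoh hmarg θ0 hq] at h
  -- h : φ (emb θ0 q) = condSignal (φ (emb θ0 q)) θ0
  -- off-diagonal zero
  have hoff : ∀ ω θ, θ ≠ θ0 → φ (emb θ0 q) (ω, θ) = 0 := by
    intro ω θ hθ'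
    rw [h]
    simp [condSignal, hθ']
  -- sum over θ0 slice is 1
  have htot := (hmap _ hd).2
  rw [Fintype.sum_prod_type] at htot
  have hslice : ∀ ω, ∑ θ, φ (emb θ0 q) (ω, θ) = φ (emb θ0 q) (ω, θ0) := by
    intro ω
    rw [show (fun θ => φ (emb θ0 q) (ω, θ)) = (fun θ => if θ = θ0 then φ (emb θ0 q) (ω, θ0) else 0) from ?_]
    · exact sum_ite1 θ0 _
    · funext θ
      by_cases hh : θ = θ0
      · subst hh; simp
      · simp [hh, hoff ω θ hh]
  have hS : ∑ ω, φ (emb θ0 q) (ω, θ0) = 1 := by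
    rw [← htot]; exact (Finset.sum_congr rfl fun ω _ => (hslice ω).symm)
  funext x
  obtain ⟨ω, θ⟩ := x
  by_cases hh : θ = θ0
  · subst hh
    rw [h]
    simp [condSignal, emb, hS, Fm]
  · rw [hoff ω θ hh]
    simp [emb, hh]

lemma isDist_Fm (θ0 : Θ) {q : Ω → ℝ} (hq : IsDist q) : IsDist (Fm φ θ0 q) := by
  have hd : IsDist (emb θ0 q) := isDist_emb θ0 hq
  constructor
  · intro ω; exact (hmap _ hd).1 (ω, θ0)
  · have htot := (hmap _ hd).2
    rw [phi_emb hmap hpos hcoh hmarg θ0 hq, sum_emb] at htot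
    exact htot

lemma Fm_zero_iff (θ0 : Θ) {q : Ω → ℝ} (hq : IsDist q) (ω : Ω) :
    Fm φ θ0 q ω = 0 ↔ q ω = 0 := by
  have hd : IsDist (emb θ0 q) := isDist_emb θ0 hq
  have := hpos (emb θ0 q) hd {(ω, θ0)}
  simp only [Finset.sum_singleton] at this
  have h2 : emb θ0 q (ω, θ0) = q ω := by simp [emb]
  rw [h2] at this
  exact this

lemma Fm_congr (θ0 θ1 : Θ) {q : Ω → ℝ} (hq : IsDist q) : Fm φ θ0 q = Fm φ θ1 q := by
  funext ω
  have h := hmarg (emb θ0 q) (emb θ1 q) (isDist_emb θ0 hq) (isDist_emb θ1 hq) ?_ ω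
  · rw [phi_emb hmap hpos hcoh hmarg θ0 hq, phi_emb hmap hpos hcoh hmarg θ1 hq] at h
    simpa [emb, sum_ite1] using h
  · intro ω'
    simp [emb]

/-- The marginal of `φ p` is `F` of the marginal of `p`. -/
lemma phi_marginal (θ0 : Θ) {p : Ω × Θ → ℝ} (hp : IsDist p) (ω : Ω) :
    ∑ θ, φ p (ω, θ) = Fm φ θ0 (fun ω' => ∑ θ, p (ω', θ)) ω := by
  set m : Ω → ℝ := fun ω' => ∑ θ, p (ω', θ) with hm
  have hmd : IsDist m := by
    constructor
    · intro ω'; exact Finset.sum_nonneg fun θ _ => hp.1 (ω', θ)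
    · rw [hm, ← Fintype.sum_prod_type]; exact hp.2
  have h := hmarg p (emb θ0 m) hp (isDist_emb θ0 hmd) ?_ ω
  · rw [phi_emb hmap hpos hcoh hmarg θ0 hmd] at h
    simpa [emb, sum_ite1] using h
  · intro ω'
    simp [emb, hm]

end Core2
section Core3
set_option linter.unusedSectionVars false
variable {Ω Θ : Type*} [Fintype Ω] [Fintype Θ] [DecidableEq Ω] [DecidableEq Θ]
variable {φ : (Ω × Θ → ℝ) → Ω × Θ → ℝ}
variable (hmap : ∀ p, IsDist p → IsDist (φ p)) (hpos : PositiveJoint φ)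
variable (hcoh : WeakSignalCoherent φ) (hmarg : Marginality φ)
include hmap hpos hcoh hmarg

/-- Conditional structure of `φ p`: on each positive signal slice, `φ p` is proportional
to `F` of the conditional of `p`. -/
lemma phi_cond (θ0 : Θ) {p : Ω × Θ → ℝ} (hp : IsDist p) {θ : Θ}
    (hθ : 0 < ∑ ω, p (ω, θ)) :
    0 < ∑ ω', φ p (ω', θ) ∧
    ∀ ω, φ p (ω, θ) = (∑ ω', φ p (ω', θ)) *
      Fm φ θ0 (fun ω' => p (ω', θ) / ∑ ω'', p (ω'', θ)) ω := by
  set S : ℝ := ∑ ω'', p (ω'', θ) with hS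
  set q : Ω → ℝ := fun ω' => p (ω', θ) / S with hq
  have hqd : IsDist q := by
    constructor
    · intro ω'; exact div_nonneg (hp.1 _) (le_of_lt hθ)
    · rw [hq, ← Finset.sum_div, ← hS, div_self (ne_of_gt hθ)]
  have hcs : condSignal p θ = emb θ q := by
    funext x
    obtain ⟨ω, θ'⟩ := x
    simp only [condSignal, emb, hq]
    by_cases h : θ' = θ
    · subst h; simp [hS]
    · simp [h]
  have hW : 0 < ∑ ω', φ p (ω', θ) := by
    have := phi_event_pos hmap hpos hcoh hmarg hp (Finset.univ ×ˢ {θ}) ?_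
    · rwa [Finset.sum_product, Finset.sum_congr rfl (fun ω _ => Finset.sum_singleton _ _)] at this
    · rw [Finset.sum_product, Finset.sum_congr rfl (fun ω _ => Finset.sum_singleton _ _)]
      exact ne_of_gt hθ
  refine ⟨hW, fun ω => ?_⟩
  have h := hcoh p hp θ hθ
  rw [hcs, phi_emb hmap hpos hcoh hmarg θ hqd] at h
  have h2 := congrFun h (ω, θ)
  simp only [emb, condSignal, if_pos rfl, if_true] at h2
  rw [Fm_congr hmap hpos hcoh hmarg θ0 θ hqd, h2]
  field_simp

/-- The mixture lemma: `F` maps binary mixtures into segments. -/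
lemma Fm_mix (θ0 : Θ) (hΘ : 2 ≤ Fintype.card Θ) {q q' : Ω → ℝ} {l : ℝ}
    (hqd : IsDist q) (hqd' : IsDist q') (hl0 : 0 < l) (hl1 : l < 1) :
    ∃ w : ℝ, 0 < w ∧ w < 1 ∧ ∀ ω,
      Fm φ θ0 (fun ω' => l * q ω' + (1 - l) * q' ω') ω
        = w * Fm φ θ0 q ω + (1 - w) * Fm φ θ0 q' ω := by
  obtain ⟨θ1, hθ1⟩ := Fintype.exists_ne_of_one_lt_card (by omega) θ0
  set p : Ω × Θ → ℝ := fun x => if x.2 = θ0 then l * q x.1 else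
    if x.2 = θ1 then (1 - l) * q' x.1 else 0 with hpdef
  have hslice : ∀ θ, ∑ ω, p (ω, θ) = if θ = θ0 then l else if θ = θ1 then 1 - l else 0 := by
    intro θ
    by_cases h0 : θ = θ0
    · subst h0; simp [hpdef, ← Finset.mul_sum, hqd.2]
    · by_cases h1 : θ = θ1
      · subst h1; simp [hpdef, h0, ← Finset.mul_sum, hqd'.2]
      · simp [hpdef, h0, h1]
  have hpd : IsDist p := by
    constructor
    · intro x
      simp only [hpdef]
      split
      · exact mul_nonneg (le_of_lt hl0) (hqd.1 _)
      · split
        · exact mul_nonneg (by linarith) (hqd'.1 _)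
        · exact le_refl 0
    · rw [Fintype.sum_prod_type, Finset.sum_comm]
      rw [Finset.sum_congr rfl (fun θ _ => hslice θ)]
      rw [sum_ite2 hθ1.symm]
      ring
  -- conditional of p at θ0 is q, at θ1 is q'
  have hc0 := phi_cond hmap hpos hcoh hmarg θ0 hpd (θ := θ0)
    (by rw [hslice]; simpa using hl0)
  have hc1 := phi_cond hmap hpos hcoh hmarg θ0 hpd (θ := θ1)
    (by rw [hslice]; simp [hθ1]; linarith)
  obtain ⟨hW0, h0⟩ := hc0
  obtain ⟨hW1, h1⟩ := hc1
  set W0 := ∑ ω', φ p (ω', θ0) with hW0d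
  set W1 := ∑ ω', φ p (ω', θ1) with hW1d
  have hq0 : (fun ω' => p (ω', θ0) / ∑ ω'', p (ω'', θ0)) = q := by
    funext ω'
    rw [hslice]
    simp only [hpdef, if_pos rfl, if_true]
    exact mul_div_cancel_left₀ _ (ne_of_gt hl0)
  have hq1 : (fun ω' => p (ω', θ1) / ∑ ω'', p (ω'', θ1)) = q' := by
    funext ω'
    rw [hslice]
    simp only [hpdef]
    simp only [if_neg (show ¬θ1 = θ0 from hθ1), if_pos rfl]
    exact mul_div_cancel_left₀ _ (by linarith)
  rw [hq0] at h0
  rw [hq1] at h1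
  -- off slices are zero
  have hoff : ∀ ω θ, θ ≠ θ0 → θ ≠ θ1 → φ p (ω, θ) = 0 := by
    intro ω θ ha hb
    exact phi_zero hmap hpos hcoh hmarg hpd (by simp [hpdef, ha, hb])
  -- marginal identity
  have hmarg1 : ∀ ω, ∑ θ, φ p (ω, θ)
      = Fm φ θ0 (fun ω' => l * q ω' + (1 - l) * q' ω') ω := by
    intro ω
    have := phi_marginal hmap hpos hcoh hmarg θ0 hpd ω
    rw [this]
    congr 1
    funext ω'
    rw [show (fun θ => p (ω', θ)) = (fun θ => if θ = θ0 then l * q ω' else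
      if θ = θ1 then (1 - l) * q' ω' else 0) from rfl]
    rw [sum_ite2 hθ1.symm]
  have hsplit : ∀ ω, ∑ θ, φ p (ω, θ) = W0 * Fm φ θ0 q ω + W1 * Fm φ θ0 q' ω := by
    intro ω
    rw [show (fun θ => φ p (ω, θ)) = (fun θ => if θ = θ0 then W0 * Fm φ θ0 q ω else
      if θ = θ1 then W1 * Fm φ θ0 q' ω else 0) from ?_]
    · rw [sum_ite2 hθ1.symm]
    · funext θ
      by_cases ha : θ = θ0
      · subst ha; simp [h0 ω]
      · by_cases hb : θ = θ1
        · subst hb; simp [ha, h1 ω]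
        · simp [ha, hb, hoff ω θ ha hb]
  have hWsum : W0 + W1 = 1 := by
    have htot := (hmap p hpd).2
    rw [Fintype.sum_prod_type, Finset.sum_comm] at htot
    rw [show (fun θ => ∑ ω, φ p (ω, θ)) = (fun θ => if θ = θ0 then W0 else
      if θ = θ1 then W1 else 0) from ?_] at htot
    · rw [sum_ite2 hθ1.symm] at htot; exact htot
    · funext θ
      by_cases ha : θ = θ0
      · subst ha; simp [hW0d]
      · by_cases hb : θ = θ1
        · subst hb; simp [ha, hW1d]
        · simp only [ha, hb, if_false]
          exact Finset.sum_eq_zero fun ω _ => hoff ω θ ha hb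
  refine ⟨W0, hW0, by linarith, fun ω => ?_⟩
  rw [← hmarg1 ω, hsplit ω, show (1 : ℝ) - W0 = W1 from by linarith]

end Core3
section Core4
set_option linter.unusedSectionVars false
variable {Ω Θ : Type*} [Fintype Ω] [Fintype Θ] [DecidableEq Ω] [DecidableEq Θ]
variable {φ : (Ω × Θ → ℝ) → Ω × Θ → ℝ}
variable (hmap : ∀ p, IsDist p → IsDist (φ p)) (hpos : PositiveJoint φ)
variable (hcoh : WeakSignalCoherent φ) (hmarg : Marginality φ)
include hmap hpos hcoh hmarg

/-- The ratio lemma: the `i:j` ratio of `F m` agrees with that of the corresponding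
edge distribution. -/
lemma Fm_ratio (θ0 : Θ) (hΘ : 2 ≤ Fintype.card Θ) {i j : Ω} (hij : i ≠ j)
    {m : Ω → ℝ} (hm : IsDist m) (hi : 0 < m i) (hj : 0 < m j) :
    Fm φ θ0 m i * Fm φ θ0 (edge (m i / (m i + m j)) i j) j
      = Fm φ θ0 (edge (m i / (m i + m j)) i j) i * Fm φ θ0 m j := by
  set t : ℝ := m i + m j with htdef
  have ht0 : 0 < t := by linarith
  have hpair : ∑ ω ∈ ({i, j} : Finset Ω), m ω = t := by
    rw [Finset.sum_pair hij]
  have ht1 : t ≤ 1 := by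
    rw [← hpair, ← hm.2]
    exact Finset.sum_le_sum_of_subset_of_nonneg (Finset.subset_univ _)
      (fun ω _ _ => hm.1 ω)
  set e : Ω → ℝ := edge (m i / t) i j with hedef
  have hx0 : 0 ≤ m i / t := div_nonneg (le_of_lt hi) (le_of_lt ht0)
  have hx1 : m i / t ≤ 1 := by
    rw [div_le_one ht0]; linarith
  have hed : IsDist e := isDist_edge hij hx0 hx1
  have hei : e i = m i / t := by simp [hedef, edge]
  have hej : e j = 1 - m i / t := by simp [hedef, edge, hij.symm]
  rcases eq_or_lt_of_le ht1 with htop | hlt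
  · -- t = 1 : m is itself the edge distribution
    have hrest : ∀ ω, ω ≠ i → ω ≠ j → m ω = 0 := by
      intro ω hωi hωj
      have h0 : ∑ ω' ∈ (Finset.univ \ {i, j} : Finset Ω), m ω' = 0 := by
        rw [Finset.sum_sdiff_eq_sub (Finset.subset_univ _), hm.2, hpair]
        linarith
      have := (Finset.sum_eq_zero_iff_of_nonneg (fun ω' _ => hm.1 ω')).mp h0 ω
        (by simp [hωi, hωj])
      exact this
    have hme : m = e := by
      funext ω
      by_cases h1 : ω = i
      · rw [h1, hei, htop, div_one]
      · by_cases h2 : ω = j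
        · rw [h2, hej, htop, div_one]
          have h3 : m i + m j = 1 := by rw [← htdef, htop]
          linarith
        · rw [hrest ω h1 h2]
          simp [hedef, edge, h1, h2]
    rw [hme]
  · -- t < 1 : decompose m = t • e + (1-t) • r
    set r : Ω → ℝ := fun ω => if ω = i ∨ ω = j then 0 else m ω / (1 - t) with hrdef
    have hrd : IsDist r := by
      constructor
      · intro ω
        simp only [hrdef]
        split
        · exact le_refl 0
        · exact div_nonneg (hm.1 ω) (by linarith)
      · have hsplit : ∀ ω, m ω = (if ω = i ∨ ω = j then 0 else m ω)
            + (if ω = i then m i else if ω = j then m j else 0) := by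
          intro ω
          by_cases h1 : ω = i
          · subst h1; simp
          · by_cases h2 : ω = j
            · subst h2; simp [h1]
            · simp [h1, h2]
        have hsum : ∑ ω, (if ω = i ∨ ω = j then 0 else m ω) = 1 - t := by
          have := hm.2
          rw [Finset.sum_congr rfl (fun ω _ => hsplit ω), Finset.sum_add_distrib,
            sum_ite2 hij] at this
          linarith
        rw [show (fun ω => r ω) = (fun ω => (if ω = i ∨ ω = j then 0 else m ω) / (1 - t))
            from ?_]
        · rw [← Finset.sum_div, hsum, div_self (by linarith)]
        · funext ω
          simp only [hrdef]
          split
          · simp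
          · rfl
    have hmdec : m = fun ω => t * e ω + (1 - t) * r ω := by
      funext ω
      by_cases h1 : ω = i
      · rw [h1, hei]
        simp only [hrdef, if_pos (Or.inl rfl)]
        field_simp
        simp
      · by_cases h2 : ω = j
        · rw [h2, hej]
          simp only [hrdef, if_pos (Or.inr rfl)]
          have h3 : m j = t - m i := by rw [htdef]; ring
          rw [h3]; field_simp
          simp
        · simp only [hrdef, h1, h2, false_or, if_neg h2]
          simp only [hedef, edge, h1, h2, if_false]
          have h1t : (1:ℝ) - t ≠ 0 := by linarith
          field_simp
          simp
    obtain ⟨w, hw0, hw1, hmix⟩ := Fm_mix hmap hpos hcoh hmarg θ0 hΘ hed hrd ht0 hlt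
    have hri : r i = 0 := by simp [hrdef]
    have hrj : r j = 0 := by simp [hrdef]
    have hFri : Fm φ θ0 r i = 0 := (Fm_zero_iff hmap hpos hcoh hmarg θ0 hrd i).mpr hri
    have hFrj : Fm φ θ0 r j = 0 := (Fm_zero_iff hmap hpos hcoh hmarg θ0 hrd j).mpr hrj
    have hi' := hmix i
    have hj' := hmix j
    rw [← hmdec] at hi' hj'
    rw [hFri] at hi'
    rw [hFrj] at hj'
    rw [hi', hj']
    ring

end Core4
section Cauchy

lemma additive_linear {G : ℝ → ℝ} (hpos : ∀ s, 0 < s → 0 < G s)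
    (hadd : ∀ s t, 0 < s → 0 < t → G (s + t) = G s + G t) :
    ∀ s, 0 < s → G s = G 1 * s := by
  have hmono : ∀ a b, 0 < a → a < b → G a < G b := by
    intro a b ha hab
    have h1 := hadd a (b - a) ha (by linarith)
    have h2 := hpos (b - a) (by linarith)
    rw [show a + (b - a) = b from by ring] at h1
    linarith
  have hnat : ∀ n : ℕ, 0 < n → ∀ a : ℝ, 0 < a → G (n * a) = n * G a := by
    intro n
    induction n with
    | zero => intro h; exact absurd h (lt_irrefl 0)
    | succ k ih =>
      intro _ a ha
      rcases Nat.eq_zero_or_pos k with hk | hk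
      · subst hk; simp
      · have h1 : ((k + 1 : ℕ) : ℝ) * a = (k : ℝ) * a + a := by push_cast; ring
        rw [h1, hadd _ a (by positivity) ha, ih hk a ha]
        push_cast; ring
  have hrat : ∀ q : ℚ, 0 < q → G (q : ℝ) = (q : ℝ) * G 1 := by
    intro q hq
    set a : ℕ := q.num.toNat with hadef
    set b : ℕ := q.den with hbdef
    have ha : 0 < a := by
      have := Rat.num_pos.mpr hq
      omega
    have hb : 0 < b := q.pos
    have hnum : 0 < q.num := Rat.num_pos.mpr hq
    have hqab : (q : ℝ) = (a : ℝ) / (b : ℝ) := by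
      rw [Rat.cast_def, hadef, hbdef]
      congr 1
      norm_cast
      omega
    have hbinv : 0 < 1 / (b : ℝ) := by positivity
    have h1 : G ((q : ℝ)) = (a : ℝ) * G (1 / b) := by
      rw [hqab, show (a : ℝ) / b = (a : ℝ) * (1 / b) from by ring]
      exact hnat a ha _ hbinv
    have h2 : G 1 = (b : ℝ) * G (1 / b) := by
      rw [show (1 : ℝ) = (b : ℝ) * (1 / b) from by field_simp]
      rw [hnat b hb _ hbinv]
      field_simp
    rw [h1, h2, hqab]
    field_simp
  intro s hs
  have hG1 : 0 < G 1 := hpos 1 one_pos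
  by_contra hne
  rcases lt_or_gt_of_ne hne with hlt | hgt
  · -- G s < G 1 * s
    have h1 : G s / G 1 < s := by rw [div_lt_iff₀ hG1]; nlinarith
    obtain ⟨q, hq1, hq2⟩ := exists_rat_btwn h1
    have hq0 : (0 : ℝ) < q := lt_trans (div_pos (hpos s hs) hG1) hq1
    have hGq : G q = (q : ℝ) * G 1 := hrat q (by exact_mod_cast hq0)
    have hm := hmono q s hq0 hq2
    rw [hGq] at hm
    have : G s < (q : ℝ) * G 1 := (div_lt_iff₀ hG1).mp hq1
    linarith
  · -- G 1 * s < G s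
    have h1 : s < G s / G 1 := by rw [lt_div_iff₀ hG1]; nlinarith
    obtain ⟨q, hq1, hq2⟩ := exists_rat_btwn h1
    have hq0 : (0 : ℝ) < q := lt_trans hs hq1
    have hGq : G q = (q : ℝ) * G 1 := hrat q (by exact_mod_cast hq0)
    have hm := hmono s q hs hq1
    rw [hGq] at hm
    have : (q : ℝ) * G 1 < G s := (lt_div_iff₀ hG1).mp hq2
    linarith

end Cauchy
section Algebra

lemma ratio_algebra {a a' b b' w A1 B1 A2 B2 A3 B3 u1 u2 u3 v1 v2 v3 : ℝ}
    (ha : 0 < a) (ha' : 0 < a') (hA1 : 0 < A1) (hA2 : 0 < A2) (hA3 : 0 < A3)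
    (hw0 : 0 < w) (hv1 : 0 < v1)
    (e1 : u1 * B1 = A1 * u3) (e2 : u1 * B2 = A2 * u2) (e3 : v1 * B2 = A2 * v2)
    (e4 : v2 * b' = a' * v3) (e5 : v1 * B3 = A3 * v3)
    (m1 : u1 = w * a) (m2 : u2 = (1 - w) * a') (m3 : u3 = w * b + (1 - w) * b') :
    B1 / A1 = b / a + B3 / A3 := by
  subst m1 m2 m3
  have hB2 : B2 = A2 * ((1 - w) * a') / (w * a) := by
    field_simp
    linarith [e2]
  have hv2 : v2 = v1 * B2 / A2 := by
    field_simp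
    linarith [e3]
  have hv3 : v3 = v2 * b' / a' := by
    field_simp
    linarith [e4]
  have hB3 : B3 = A3 * v3 / v1 := by
    field_simp
    linarith [e5]
  have hB1 : B1 = A1 * (w * b + (1 - w) * b') / (w * a) := by
    field_simp
    linarith [e1]
  rw [hB1, hB3, hv3, hv2, hB2]
  field_simp

end Algebra
section Core5
set_option linter.unusedSectionVars false
set_option maxHeartbeats 1000000
variable {Ω Θ : Type*} [Fintype Ω] [Fintype Θ] [DecidableEq Ω] [DecidableEq Θ]
variable {φ : (Ω × Θ → ℝ) → Ω × Θ → ℝ}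
variable (hmap : ∀ p, IsDist p → IsDist (φ p)) (hpos : PositiveJoint φ)
variable (hcoh : WeakSignalCoherent φ) (hmarg : Marginality φ)
include hmap hpos hcoh hmarg

lemma Fm_pos (θ0 : Θ) {μ : Ω → ℝ} (hμ : IsDist μ) {ω : Ω} (hω : 0 < μ ω) :
    0 < Fm φ θ0 μ ω := by
  refine lt_of_le_of_ne ((isDist_Fm hmap hpos hcoh hmarg θ0 hμ).1 ω) (Ne.symm ?_)
  intro hc
  rw [(Fm_zero_iff hmap hpos hcoh hmarg θ0 hμ ω).mp hc] at hω
  exact lt_irrefl 0 hω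

lemma Fm_edge_linear (θ0 : Θ) (hΘ : 2 ≤ Fintype.card Θ) (hΩ : 3 ≤ Fintype.card Ω)
    {i k : Ω} (hik : i ≠ k) :
    ∃ c : ℝ, 0 < c ∧ ∀ x : ℝ, 0 < x → x < 1 →
      Fm φ θ0 (edge x i k) k * x = c * (Fm φ θ0 (edge x i k) i * (1 - x)) := by
  obtain ⟨z, hz⟩ : ∃ z : Ω, z ∉ ({i, k} : Finset Ω) := by
    have h1 : (({i, k} : Finset Ω)ᶜ).Nonempty := by
      rw [← Finset.card_pos, Finset.card_compl, Finset.card_pair hik]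
      omega
    obtain ⟨z, hz⟩ := h1
    exact ⟨z, Finset.mem_compl.mp hz⟩
  simp only [Finset.mem_insert, Finset.mem_singleton, not_or] at hz
  obtain ⟨hzi, hzk⟩ := hz
  have hiz : i ≠ z := fun h => hzi h.symm
  have hki : ¬k = i := fun h => hik h.symm
  have hkz : ¬k = z := fun h => hzk h.symm
  have epos : ∀ (a b : Ω), a ≠ b → ∀ x : ℝ, 0 < x → x < 1 →
      0 < Fm φ θ0 (edge x a b) a ∧ 0 < Fm φ θ0 (edge x a b) b := by
    intro a b hab x h0 h1
    have hd := isDist_edge hab (le_of_lt h0) (le_of_lt h1)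
    constructor
    · exact Fm_pos hmap hpos hcoh hmarg θ0 hd (by simp [edge]; linarith)
    · exact Fm_pos hmap hpos hcoh hmarg θ0 hd
        (by simp [edge, show ¬b = a from fun h => hab h.symm]; linarith)
  set G : ℝ → ℝ := fun s =>
    Fm φ θ0 (edge (1 / (1 + s)) i k) k / Fm φ θ0 (edge (1 / (1 + s)) i k) i with hGdef
  have hxrange : ∀ s : ℝ, 0 < s → 0 < 1 / (1 + s) ∧ 1 / (1 + s) < 1 := by
    intro s hs
    constructor
    · positivity
    · rw [div_lt_one (by linarith)]; linarith
  have hGpos : ∀ s, 0 < s → 0 < G s := by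
    intro s hs
    obtain ⟨h0, h1⟩ := hxrange s hs
    obtain ⟨hi', hk'⟩ := epos i k hik _ h0 h1
    exact div_pos hk' hi'
  have hGadd : ∀ s t, 0 < s → 0 < t → G (s + t) = G s + G t := by
    intro s t hs ht
    obtain ⟨x, hxdef⟩ : ∃ x : ℝ, x = 1 / (1 + s) := ⟨_, rfl⟩
    have hx0 : 0 < x := hxdef ▸ (hxrange s hs).1
    have hx1 : x < 1 := hxdef ▸ (hxrange s hs).2
    have hxs : x * (1 + s) = 1 := by rw [hxdef]; field_simp
    obtain ⟨lam, hlamdef⟩ : ∃ l : ℝ, l = 1 / (1 + 2 * t * x) := ⟨_, rfl⟩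
    have hld : 0 < 1 + 2 * t * x := by nlinarith
    have hlam0 : 0 < lam := by rw [hlamdef]; positivity
    have hlam1 : lam < 1 := by
      rw [hlamdef, div_lt_one hld]; nlinarith
    have hlamt : lam * (1 + 2 * t * x) = 1 := by rw [hlamdef]; field_simp
    have h1l : (0:ℝ) < 1 - lam := by linarith
    set q : Ω → ℝ := edge x i k with hqdef
    set q' : Ω → ℝ := edge (1/2 : ℝ) z k with hq'def
    have hqd : IsDist q := isDist_edge hik (le_of_lt hx0) (le_of_lt hx1)
    have hq'd : IsDist q' := isDist_edge hzk (by norm_num) (by norm_num)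
    set m : Ω → ℝ := fun ω' => lam * q ω' + (1 - lam) * q' ω' with hmdef
    have hmd : IsDist m := by
      constructor
      · intro ω
        have h1 : 0 ≤ lam * q ω := mul_nonneg (le_of_lt hlam0) (hqd.1 ω)
        have h2 : 0 ≤ (1 - lam) * q' ω := mul_nonneg (by linarith) (hq'd.1 ω)
        simp only [hmdef]; linarith
      · simp only [hmdef]
        rw [Finset.sum_add_distrib, ← Finset.mul_sum, ← Finset.mul_sum, hqd.2, hq'd.2]
        ring
    have hqi : q i = x := by simp [hqdef, edge]
    have hqk : q k = 1 - x := by simp [hqdef, edge, hki]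
    have hqz : q z = 0 := by simp [hqdef, edge, hzi, hzk]
    have hq'i : q' i = 0 := by simp [hq'def, edge, hiz, hik]
    have hq'z : q' z = 1/2 := by simp [hq'def, edge]
    have hq'k : q' k = 1/2 := by simp [hq'def, edge, hkz]; norm_num
    have hmi : m i = lam * x := by simp only [hmdef, hqi, hq'i]; ring
    have hmz : m z = (1 - lam) * (1/2) := by simp only [hmdef, hqz, hq'z]; ring
    have hmk : m k = lam * (1 - x) + (1 - lam) * (1/2) := by
      simp only [hmdef, hqk, hq'k]
    have hmi0 : 0 < m i := by rw [hmi]; exact mul_pos hlam0 hx0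
    have hmz0 : 0 < m z := by rw [hmz]; nlinarith
    have hmk0 : 0 < m k := by
      rw [hmk]; nlinarith [mul_pos hlam0 (show (0:ℝ) < 1 - x by linarith)]
    obtain ⟨T, hTdef⟩ : ∃ T : ℝ, T = lam * x + (1 - lam) := ⟨_, rfl⟩
    have hT0 : 0 < T := by rw [hTdef]; nlinarith [mul_pos hlam0 hx0]
    have hTne : T ≠ 0 := ne_of_gt hT0
    set m'' : Ω → ℝ := fun ω => if ω = i then lam * x / T else if ω = z then
      (1 - lam) / 2 / T else if ω = k then (1 - lam) / 2 / T else 0 with hm''def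
    have hm''i : m'' i = lam * x / T := by simp [hm''def]
    have hm''z : m'' z = (1 - lam) / 2 / T := by simp [hm''def, hzi]
    have hm''k : m'' k = (1 - lam) / 2 / T := by simp [hm''def, hki, hkz]
    have hm''d : IsDist m'' := by
      constructor
      · intro ω
        simp only [hm''def]
        split
        · exact div_nonneg (mul_nonneg (le_of_lt hlam0) (le_of_lt hx0)) (le_of_lt hT0)
        · split
          · exact div_nonneg (div_nonneg (by linarith) (by norm_num)) (le_of_lt hT0)
          · split
            · exact div_nonneg (div_nonneg (by linarith) (by norm_num)) (le_of_lt hT0)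
            · exact le_refl 0
      · simp only [hm''def]
        rw [sum_ite3 hiz hik hzk]
        rw [show lam * x / T + (1 - lam) / 2 / T + (1 - lam) / 2 / T
            = (lam * x + (1 - lam)) / T from by ring, ← hTdef, div_self hTne]
    have hm''i0 : 0 < m'' i := by rw [hm''i]; exact div_pos (mul_pos hlam0 hx0) hT0
    have hm''z0 : 0 < m'' z := by rw [hm''z]; positivity
    have hm''k0 : 0 < m'' k := by rw [hm''k]; positivity
    obtain ⟨w, hw0, hw1, hmix⟩ := Fm_mix hmap hpos hcoh hmarg θ0 hΘ hqd hq'd hlam0 hlam1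
    have hFq'i : Fm φ θ0 q' i = 0 := (Fm_zero_iff hmap hpos hcoh hmarg θ0 hq'd i).mpr hq'i
    have hFqz : Fm φ θ0 q z = 0 := (Fm_zero_iff hmap hpos hcoh hmarg θ0 hqd z).mpr hqz
    have M1 : Fm φ θ0 m i = w * Fm φ θ0 q i := by rw [hmix i, hFq'i]; ring
    have M2 : Fm φ θ0 m z = (1 - w) * Fm φ θ0 q' z := by rw [hmix z, hFqz]; ring
    have M3 : Fm φ θ0 m k = w * Fm φ θ0 q k + (1 - w) * Fm φ θ0 q' k := hmix k
    have hFqi0 : 0 < Fm φ θ0 q i := (epos i k hik x hx0 hx1).1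
    have hFq'z0 : 0 < Fm φ θ0 q' z := (epos z k hzk (1/2) (by norm_num) (by norm_num)).1
    have hFm''i0 : 0 < Fm φ θ0 m'' i := Fm_pos hmap hpos hcoh hmarg θ0 hm''d hm''i0
    have harg1 : m i / (m i + m k) = 1 / (1 + (s + t)) := by
      rw [div_eq_div_iff (ne_of_gt (by linarith : (0:ℝ) < m i + m k))
        (ne_of_gt (by linarith : (0:ℝ) < 1 + (s + t))), hmi, hmk]
      linear_combination lam * hxs + (1/2 : ℝ) * hlamt
    have harg2 : m i / (m i + m z) = 1 / (1 + t) := by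
      rw [div_eq_div_iff (ne_of_gt (by linarith : (0:ℝ) < m i + m z))
        (ne_of_gt (by linarith : (0:ℝ) < 1 + t)), hmi, hmz]
      linear_combination (1/2 : ℝ) * hlamt
    have harg2' : m'' i / (m'' i + m'' z) = 1 / (1 + t) := by
      rw [div_eq_div_iff (ne_of_gt (by linarith : (0:ℝ) < m'' i + m'' z))
        (ne_of_gt (by linarith : (0:ℝ) < 1 + t)), hm''i, hm''z]
      linear_combination (1 / (2 * T)) * hlamt
    have harg3 : m'' i / (m'' i + m'' k) = 1 / (1 + t) := by
      rw [div_eq_div_iff (ne_of_gt (by linarith : (0:ℝ) < m'' i + m'' k))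
        (ne_of_gt (by linarith : (0:ℝ) < 1 + t)), hm''i, hm''k]
      linear_combination (1 / (2 * T)) * hlamt
    have harg4 : m'' z / (m'' z + m'' k) = 1 / 2 := by
      rw [div_eq_div_iff (ne_of_gt (by linarith : (0:ℝ) < m'' z + m'' k))
        (by norm_num : (2:ℝ) ≠ 0), hm''z, hm''k]
      ring
    have R1 := Fm_ratio hmap hpos hcoh hmarg θ0 hΘ hik hmd hmi0 hmk0
    rw [harg1] at R1
    have R2 := Fm_ratio hmap hpos hcoh hmarg θ0 hΘ hiz hmd hmi0 hmz0
    rw [harg2] at R2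
    have R2' := Fm_ratio hmap hpos hcoh hmarg θ0 hΘ hiz hm''d hm''i0 hm''z0
    rw [harg2'] at R2'
    have R4 := Fm_ratio hmap hpos hcoh hmarg θ0 hΘ hzk hm''d hm''z0 hm''k0
    rw [harg4, ← hq'def] at R4
    have R3 := Fm_ratio hmap hpos hcoh hmarg θ0 hΘ hik hm''d hm''i0 hm''k0
    rw [harg3] at R3
    obtain ⟨ht0', ht1'⟩ := hxrange t ht
    obtain ⟨hst0', hst1'⟩ := hxrange (s + t) (by linarith)
    have hA1 : 0 < Fm φ θ0 (edge (1 / (1 + (s + t))) i k) i := (epos i k hik _ hst0' hst1').1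
    have hA2 : 0 < Fm φ θ0 (edge (1 / (1 + t)) i z) i := (epos i z hiz _ ht0' ht1').1
    have hA3 : 0 < Fm φ θ0 (edge (1 / (1 + t)) i k) i := (epos i k hik _ ht0' ht1').1
    simp only [hGdef]
    rw [← hxdef, ← hqdef]
    exact ratio_algebra hFqi0 hFq'z0 hA1 hA2 hA3 hw0 hFm''i0 R1 R2 R2' R4 R3 M1 M2 M3
  have hlin := additive_linear hGpos hGadd
  refine ⟨G 1, hGpos 1 one_pos, ?_⟩
  intro x h0 h1
  have hxne : x ≠ 0 := ne_of_gt h0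
  have h1x : 0 < 1 - x := by linarith
  have hs : 0 < (1 - x) / x := div_pos h1x h0
  have hx : 1 / (1 + (1 - x) / x) = x := by
    rw [show 1 + (1 - x) / x = 1 / x from by field_simp; ring]
    simp
  have hG := hlin ((1 - x) / x) hs
  simp only [hGdef] at hG
  rw [hx] at hG
  have hFi : 0 < Fm φ θ0 (edge x i k) i := (epos i k hik x h0 h1).1
  rw [div_eq_iff (ne_of_gt hFi)] at hG
  have hc : (1 - x) / x * x = 1 - x := div_mul_cancel₀ _ hxne
  rw [hG]
  linear_combination (Fm φ θ0 (edge (1 / (1 + 1)) i k) k /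
    Fm φ θ0 (edge (1 / (1 + 1)) i k) i * Fm φ θ0 (edge x i k) i) * hc

end Core5
section Core6
set_option linter.unusedSectionVars false
set_option maxHeartbeats 1000000
variable {Ω Θ : Type*} [Fintype Ω] [Fintype Θ] [DecidableEq Ω] [DecidableEq Θ]
variable {φ : (Ω × Θ → ℝ) → Ω × Θ → ℝ}
variable (hmap : ∀ p, IsDist p → IsDist (φ p)) (hpos : PositiveJoint φ)
variable (hcoh : WeakSignalCoherent φ) (hmarg : Marginality φ)
include hmap hpos hcoh hmarg

lemma Fm_formula (θ0 : Θ) (hΘ : 2 ≤ Fintype.card Θ) (hΩ : 3 ≤ Fintype.card Ω) :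
    ∃ ψ : Ω → ℝ, (∀ ω, 0 < ψ ω) ∧ ∀ q, IsDist q → ∀ ω,
      Fm φ θ0 q ω * (∑ ω', ψ ω' * q ω') = ψ ω * q ω := by
  have hN : (0:ℝ) < (Fintype.card Ω : ℝ) := by
    have : 0 < Fintype.card Ω := by omega
    exact_mod_cast this
  set U : Ω → ℝ := fun _ => 1 / (Fintype.card Ω : ℝ) with hUdef
  have hUd : IsDist U := by
    constructor
    · intro ω; simp only [hUdef]; positivity
    · simp only [hUdef, Finset.sum_const, Finset.card_univ, nsmul_eq_mul]
      field_simp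
  have hUpos : ∀ ω, 0 < U ω := by intro ω; simp only [hUdef]; positivity
  set ψ : Ω → ℝ := Fm φ θ0 U with hψdef
  have hψpos : ∀ ω, 0 < ψ ω := fun ω => Fm_pos hmap hpos hcoh hmarg θ0 hUd (hUpos ω)
  -- the pairwise identity
  have pair : ∀ i j : Ω, ∀ q : Ω → ℝ, IsDist q →
      ψ j * (Fm φ θ0 q i * q j) = ψ i * (q i * Fm φ θ0 q j) := by
    intro i j q hq
    by_cases hij : i = j
    · subst hij; ring
    · obtain ⟨c, hc0, hcl⟩ := Fm_edge_linear hmap hpos hcoh hmarg θ0 hΘ hΩ hij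
      have K : ∀ m : Ω → ℝ, IsDist m → c * Fm φ θ0 m i * m j = m i * Fm φ θ0 m j := by
        intro m hmd
        by_cases hmi : m i = 0
        · rw [hmi, (Fm_zero_iff hmap hpos hcoh hmarg θ0 hmd i).mpr hmi]
          ring
        · by_cases hmj : m j = 0
          · rw [hmj, (Fm_zero_iff hmap hpos hcoh hmarg θ0 hmd j).mpr hmj]
            ring
          · have hmi0 : 0 < m i := lt_of_le_of_ne (hmd.1 i) (Ne.symm hmi)
            have hmj0 : 0 < m j := lt_of_le_of_ne (hmd.1 j) (Ne.symm hmj)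
            have hsum0 : 0 < m i + m j := by linarith
            have hx0 : 0 < m i / (m i + m j) := div_pos hmi0 hsum0
            have hx1 : m i / (m i + m j) < 1 := (div_lt_one hsum0).mpr (by linarith)
            have R := Fm_ratio hmap hpos hcoh hmarg θ0 hΘ hij hmd hmi0 hmj0
            have L := hcl _ hx0 hx1
            have hFei0 : 0 < Fm φ θ0 (edge (m i / (m i + m j)) i j) i :=
              Fm_pos hmap hpos hcoh hmarg θ0
                (isDist_edge hij (le_of_lt hx0) (le_of_lt hx1)) (by simp [edge]; exact hx0)
            have hXm : m i / (m i + m j) * (m i + m j) = m i :=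
              div_mul_cancel₀ _ (ne_of_gt hsum0)
            have h2 : Fm φ θ0 (edge (m i / (m i + m j)) i j) i *
                (c * Fm φ θ0 m i * (1 - m i / (m i + m j)))
                = Fm φ θ0 (edge (m i / (m i + m j)) i j) i *
                  (Fm φ θ0 m j * (m i / (m i + m j))) := by
              linear_combination (-(Fm φ θ0 m i)) * L + (m i / (m i + m j)) * R
            have h3 := mul_left_cancel₀ (ne_of_gt hFei0) h2
            linear_combination (m i + m j) * h3 + (c * Fm φ θ0 m i + Fm φ θ0 m j) * hXm
      have hcU := K U hUd
      have hcψ : c * ψ i = ψ j := by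
        have hUne : U i ≠ 0 := ne_of_gt (hUpos i)
        have hUij : U i = U j := rfl
        rw [← hψdef] at hcU
        field_simp [hUdef] at hcU
        rw [hψdef]
        have hUj : U j ≠ 0 := hUij ▸ hUne
        rw [hψdef] at hcU
        exact mul_right_cancel₀ hUj (by rw [hcU, hUij]; ring)
      have hKq := K q hq
      linear_combination ψ i * hKq - (Fm φ θ0 q i * q j) * hcψ
  refine ⟨ψ, hψpos, fun q hq ω => ?_⟩
  calc Fm φ θ0 q ω * (∑ ω', ψ ω' * q ω')
      = ∑ ω', ψ ω' * (Fm φ θ0 q ω * q ω') := by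
        rw [Finset.mul_sum]; exact Finset.sum_congr rfl fun ω' _ => by ring
    _ = ∑ ω', ψ ω * (q ω * Fm φ θ0 q ω') :=
        Finset.sum_congr rfl fun ω' _ => pair ω ω' q hq
    _ = ψ ω * q ω * ∑ ω', Fm φ θ0 q ω' := by
        rw [Finset.mul_sum]; exact Finset.sum_congr rfl fun ω' _ => by ring
    _ = ψ ω * q ω := by
        rw [(isDist_Fm hmap hpos hcoh hmarg θ0 hq).2, mul_one]

end Core6
section Matrixx
open Polynomial

lemma eval_charpoly' {n : Type*} [Fintype n] [DecidableEq n] (M : Matrix n n ℝ) (u : ℝ) :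
    (M.charpoly).eval u = (u • (1 : Matrix n n ℝ) - M).det := by
  rw [Matrix.charpoly, ← Polynomial.coe_evalRingHom, RingHom.map_det]
  congr 1; ext i j
  by_cases h : i = j <;>
    simp [h, Matrix.charmatrix_apply, Matrix.one_apply, Matrix.smul_apply]

lemma exists_good_t {n : Type*} [Fintype n] [DecidableEq n] (Q : Matrix n n ℝ)
    {ε : ℝ} (hε : 0 < ε) :
    ∃ t : ℝ, 0 < t ∧ t < ε ∧ ((1 - t) • Q + t • (1 : Matrix n n ℝ)).det ≠ 0 := by
  have hmono : (Matrix.charpoly (-Q)).Monic := Matrix.charpoly_monic _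
  have hne : Matrix.charpoly (-Q) ≠ 0 := hmono.ne_zero
  have hfin : {u : ℝ | (Matrix.charpoly (-Q)).IsRoot u}.Finite :=
    Polynomial.finite_setOf_isRoot hne
  have hIoo : (Set.Ioo (0:ℝ) ε).Infinite := Set.Ioo.infinite hε |> Set.infinite_coe_iff.mp
  obtain ⟨u, hu⟩ := (hIoo.diff hfin).nonempty
  obtain ⟨⟨hu0, huε⟩, hunr⟩ := hu
  have hdet : (u • (1 : Matrix n n ℝ) + Q).det ≠ 0 := by
    intro hc
    apply hunr
    simp only [Set.mem_setOf_eq, Polynomial.IsRoot]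
    rw [eval_charpoly', sub_neg_eq_add]
    exact hc
  set t : ℝ := u / (1 + u) with htdef
  have h1u : (0:ℝ) < 1 + u := by linarith
  have ht0 : 0 < t := div_pos hu0 h1u
  have htu : t < u := by
    rw [htdef, div_lt_iff₀ h1u]
    nlinarith
  have h1t : 1 - t = 1 / (1 + u) := by
    rw [htdef]; field_simp; ring
  have h1t0 : (0:ℝ) < 1 - t := by rw [h1t]; positivity
  refine ⟨t, ht0, lt_trans htu huε, ?_⟩
  have hfact : (1 - t) • (u • (1 : Matrix n n ℝ) + Q) = (1 - t) • Q + t • 1 := by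
    rw [smul_add, smul_smul]
    have : (1 - t) * u = t := by rw [h1t, htdef]; field_simp
    rw [this, add_comm]
  rw [← hfact, Matrix.det_smul]
  exact mul_ne_zero (pow_ne_zero _ (ne_of_gt h1t0)) hdet

end Matrixx
section Core7
set_option linter.unusedSectionVars false
set_option maxHeartbeats 1000000
variable {Ω Θ : Type*} [Fintype Ω] [Fintype Θ] [DecidableEq Ω] [DecidableEq Θ]
variable {φ : (Ω × Θ → ℝ) → Ω × Θ → ℝ}
variable (hmap : ∀ p, IsDist p → IsDist (φ p)) (hpos : PositiveJoint φ)
variable (hcoh : WeakSignalCoherent φ) (hmarg : Marginality φ)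
include hmap hpos hcoh hmarg

lemma exact_formula (θ0 : Θ) {ψ : Ω → ℝ} (hψpos : ∀ ω, 0 < ψ ω)
    (hψF : ∀ q : Ω → ℝ, IsDist q → ∀ ω, Fm φ θ0 q ω * (∑ ω', ψ ω' * q ω') = ψ ω * q ω)
    {p : Ω × Θ → ℝ} (hp : IsDist p) (hS : ∀ θ' : Θ, 0 < ∑ ω', p (ω', θ'))
    (hZ : 0 < ∑ x : Ω × Θ, ψ x.1 * p x)
    (hind : ∀ lam : Θ → ℝ,
      (∀ ω' : Ω, ∑ θ', lam θ' * (p (ω', θ') / ∑ ω'', p (ω'', θ')) = 0) → ∀ θ', lam θ' = 0)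
    (ω : Ω) (θ : Θ) :
    φ p (ω, θ) = ψ ω * p (ω, θ) / ∑ x : Ω × Θ, ψ x.1 * p x := by
  have hSψ : ∀ θ' : Θ, 0 < ∑ ω'', ψ ω'' * p (ω'', θ') := by
    intro θ'
    obtain ⟨ω0, hω0⟩ : ∃ ω0, 0 < p (ω0, θ') := by
      by_contra h; push_neg at h
      have hz : ∀ ω', p (ω', θ') = 0 := fun ω' => le_antisymm (h ω') (hp.1 _)
      have h2 := hS θ'
      rw [Finset.sum_congr rfl fun ω' _ => hz ω'] at h2
      simp at h2
    exact Finset.sum_pos' (fun ω' _ => mul_nonneg (le_of_lt (hψpos ω')) (hp.1 _))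
      ⟨ω0, Finset.mem_univ _, mul_pos (hψpos ω0) hω0⟩
  have hcond := fun θ' : Θ => phi_cond hmap hpos hcoh hmarg θ0 hp (hS θ')
  have hqd : ∀ θ' : Θ, IsDist (fun ω'' => p (ω'', θ') / ∑ ω''', p (ω''', θ')) := by
    intro θ'
    constructor
    · intro ω''; exact div_nonneg (hp.1 _) (le_of_lt (hS θ'))
    · rw [← Finset.sum_div, div_self (ne_of_gt (hS θ'))]
  have hFqv : ∀ (θ' : Θ) (ω' : Ω),
      Fm φ θ0 (fun ω'' => p (ω'', θ') / ∑ ω''', p (ω''', θ')) ω'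
        = ψ ω' * p (ω', θ') / ∑ ω'', ψ ω'' * p (ω'', θ') := by
    intro θ' ω'
    have h := hψF _ (hqd θ') ω'
    have hsq : (∑ ω'', ψ ω'' * (p (ω'', θ') / ∑ ω''', p (ω''', θ')))
        = (∑ ω'', ψ ω'' * p (ω'', θ')) / ∑ ω''', p (ω''', θ') := by
      rw [Finset.sum_div]
      exact Finset.sum_congr rfl fun ω'' _ => by ring
    rw [hsq] at h
    rw [eq_div_iff (ne_of_gt (hSψ θ'))]
    have hSS : (∑ ω''', p (ω''', θ')) * (∑ ω''', p (ω''', θ'))⁻¹ = 1 :=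
      mul_inv_cancel₀ (ne_of_gt (hS θ'))
    linear_combination (∑ ω''', p (ω''', θ')) * h -
      (Fm φ θ0 (fun ω'' => p (ω'', θ') / ∑ ω''', p (ω''', θ')) ω' *
        (∑ ω'', ψ ω'' * p (ω'', θ')) - ψ ω' * p (ω', θ')) * hSS
  have hφval : ∀ (θ' : Θ) (ω' : Ω), φ p (ω', θ')
      = (∑ ω'', φ p (ω'', θ')) * (ψ ω' * p (ω', θ') / ∑ ω'', ψ ω'' * p (ω'', θ')) := by
    intro θ' ω'
    rw [(hcond θ').2 ω', hFqv θ' ω']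
  -- the marginal identity
  have hZm : (∑ ω'', ψ ω'' * ∑ θ'', p (ω'', θ'')) = ∑ x : Ω × Θ, ψ x.1 * p x := by
    rw [Fintype.sum_prod_type]
    exact Finset.sum_congr rfl fun ω'' _ => by rw [Finset.mul_sum]
  have hmd : IsDist (fun ω'' => ∑ θ'', p (ω'', θ'')) := by
    constructor
    · intro ω''; exact Finset.sum_nonneg fun θ'' _ => hp.1 _
    · rw [← Fintype.sum_prod_type]; exact hp.2
  have hFmm : ∀ ω' : Ω, Fm φ θ0 (fun ω'' => ∑ θ'', p (ω'', θ'')) ω'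
      = ψ ω' * (∑ θ'', p (ω', θ'')) / ∑ x : Ω × Θ, ψ x.1 * p x := by
    intro ω'
    have h := hψF _ hmd ω'
    rw [hZm] at h
    rw [eq_div_iff (ne_of_gt hZ)]
    exact h
  have hmargeq : ∀ ω' : Ω,
      (∑ θ'', (∑ ω'', φ p (ω'', θ'')) * (ψ ω' * p (ω', θ'') / ∑ ω'', ψ ω'' * p (ω'', θ'')))
        = ψ ω' * (∑ θ'', p (ω', θ'')) / ∑ x : Ω × Θ, ψ x.1 * p x := by
    intro ω'
    rw [← hFmm ω', ← phi_marginal hmap hpos hcoh hmarg θ0 hp ω']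
    exact Finset.sum_congr rfl fun θ'' _ => (hφval θ'' ω').symm
  -- independence application
  have hlam0 : ∀ θ' : Θ,
      ((∑ ω'', φ p (ω'', θ')) / (∑ ω'', ψ ω'' * p (ω'', θ'))
        - 1 / ∑ x : Ω × Θ, ψ x.1 * p x) * (∑ ω'', p (ω'', θ')) = 0 := by
    apply hind
    intro ω'
    have hψne := ne_of_gt (hψpos ω')
    have hstep : ∀ θ' : Θ,
        ((∑ ω'', φ p (ω'', θ')) / (∑ ω'', ψ ω'' * p (ω'', θ'))
          - 1 / ∑ x : Ω × Θ, ψ x.1 * p x) * (∑ ω'', p (ω'', θ'))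
          * (p (ω', θ') / ∑ ω'', p (ω'', θ'))
        = ((∑ ω'', φ p (ω'', θ')) / (∑ ω'', ψ ω'' * p (ω'', θ'))
          - 1 / ∑ x : Ω × Θ, ψ x.1 * p x) * p (ω', θ') := by
      intro θ'
      have hSS : (∑ ω'', p (ω'', θ')) * (∑ ω'', p (ω'', θ'))⁻¹ = 1 :=
        mul_inv_cancel₀ (ne_of_gt (hS θ'))
      linear_combination (((∑ ω'', φ p (ω'', θ')) / (∑ ω'', ψ ω'' * p (ω'', θ'))
        - 1 / ∑ x : Ω × Θ, ψ x.1 * p x) * p (ω', θ')) * hSS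
    rw [Finset.sum_congr rfl fun θ' _ => hstep θ']
    have h5 : ψ ω' * ∑ θ', ((∑ ω'', φ p (ω'', θ')) / (∑ ω'', ψ ω'' * p (ω'', θ'))
        - 1 / ∑ x : Ω × Θ, ψ x.1 * p x) * p (ω', θ') = 0 := by
      rw [Finset.mul_sum]
      have hterm : ∀ θ' : Θ, ψ ω' * (((∑ ω'', φ p (ω'', θ')) / (∑ ω'', ψ ω'' * p (ω'', θ'))
          - 1 / ∑ x : Ω × Θ, ψ x.1 * p x) * p (ω', θ'))
          = (∑ ω'', φ p (ω'', θ')) * (ψ ω' * p (ω', θ') / ∑ ω'', ψ ω'' * p (ω'', θ'))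
            - ψ ω' * p (ω', θ') / ∑ x : Ω × Θ, ψ x.1 * p x := by
        intro θ'; ring
      rw [Finset.sum_congr rfl fun θ' _ => hterm θ', Finset.sum_sub_distrib, hmargeq ω']
      rw [show (∑ θ'', ψ ω' * p (ω', θ'') / ∑ x : Ω × Θ, ψ x.1 * p x)
          = ψ ω' * (∑ θ'', p (ω', θ'')) / ∑ x : Ω × Θ, ψ x.1 * p x from by
        rw [← Finset.sum_div, ← Finset.mul_sum]]
      ring
    exact (mul_eq_zero.mp h5).resolve_left hψne
  -- conclude
  have hWv : (∑ ω'', φ p (ω'', θ))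
      = (∑ ω'', ψ ω'' * p (ω'', θ)) / ∑ x : Ω × Θ, ψ x.1 * p x := by
    have h := hlam0 θ
    rcases mul_eq_zero.mp h with h1 | h1
    · have h2 : (∑ ω'', φ p (ω'', θ)) / (∑ ω'', ψ ω'' * p (ω'', θ))
          = 1 / ∑ x : Ω × Θ, ψ x.1 * p x := by linarith
      rw [div_eq_div_iff (ne_of_gt (hSψ θ)) (ne_of_gt hZ)] at h2
      rw [eq_div_iff (ne_of_gt hZ)]
      linarith
    · exact absurd h1 (ne_of_gt (hS θ))
  rw [hφval θ ω, hWv]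
  have hSψne := ne_of_gt (hSψ θ)
  have hZne := ne_of_gt hZ
  field_simp

end Core7

set_option maxHeartbeats 1000000 in
/-- **Theorem (case `|Ω| ≥ |Θ|`)**: if `|Ω| ≥ 3`, `|Θ| ≥ 2`, `|Ω| ≥ |Θ|` and `φ`
satisfies positivity, continuity, weak signal coherence and marginality, then there is
`ψ : Ω → ℝ₊₊` with `φ(p)(ω,θ) = ψ(ω)p(ω,θ) / Σ_{ω',θ'} ψ(ω')p(ω',θ')`. -/
theorem stmt9 {Ω Θ : Type*} [Fintype Ω] [Fintype Θ] [DecidableEq Θ]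
    (hΩ : 3 ≤ Fintype.card Ω) (hΘ : 2 ≤ Fintype.card Θ)
    (hcard : Fintype.card Θ ≤ Fintype.card Ω)
    (φ : (Ω × Θ → ℝ) → Ω × Θ → ℝ)
    (hmap : ∀ p, IsDist p → IsDist (φ p))
    (hpos : PositiveJoint φ)
    (hcont : ContinuousOn φ {p | IsDist p})
    (hcoh : WeakSignalCoherent φ)
    (hmarg : Marginality φ) :
    ∃ ψ : Ω → ℝ, (∀ ω, 0 < ψ ω) ∧
      ∀ p, IsDist p → ∀ (ω : Ω) (θ : Θ),
        φ p (ω, θ) = ψ ω * p (ω, θ) / ∑ x : Ω × Θ, ψ x.1 * p x := by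
  letI : DecidableEq Ω := Classical.decEq Ω
  obtain ⟨θ0⟩ : Nonempty Θ := Fintype.card_pos_iff.mp (by omega)
  obtain ⟨ι⟩ : Nonempty (Θ ↪ Ω) := Function.Embedding.nonempty_of_card_le hcard
  obtain ⟨ψ, hψpos, hψF⟩ := Fm_formula hmap hpos hcoh hmarg θ0 hΘ hΩ
  refine ⟨ψ, hψpos, ?_⟩
  have hZpos : ∀ p : Ω × Θ → ℝ, IsDist p → 0 < ∑ x : Ω × Θ, ψ x.1 * p x := by
    intro p hp
    obtain ⟨x0, hx0⟩ : ∃ x, 0 < p x := by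
      by_contra h
      push_neg at h
      have hz : ∀ x, p x = 0 := fun x => le_antisymm (h x) (hp.1 x)
      have h2 := hp.2
      rw [Finset.sum_congr rfl fun x _ => hz x] at h2
      simp at h2
    exact Finset.sum_pos' (fun x _ => mul_nonneg (le_of_lt (hψpos x.1)) (hp.1 x))
      ⟨x0, Finset.mem_univ _, mul_pos (hψpos x0.1) hx0⟩
  -- passing to limits
  have limit : ∀ p : Ω × Θ → ℝ, IsDist p → ∀ pn : ℕ → Ω × Θ → ℝ, (∀ n, IsDist (pn n)) →
      (∀ x, Filter.Tendsto (fun n => pn n x) Filter.atTop (nhds (p x))) →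
      (∀ (n : ℕ) (ω : Ω) (θ : Θ), φ (pn n) (ω, θ)
        = ψ ω * pn n (ω, θ) / ∑ x : Ω × Θ, ψ x.1 * pn n x) →
      ∀ (ω : Ω) (θ : Θ), φ p (ω, θ) = ψ ω * p (ω, θ) / ∑ x : Ω × Θ, ψ x.1 * p x := by
    intro p hp pn hpn htend hfn ω θ
    have htendp : Filter.Tendsto pn Filter.atTop (nhds p) := tendsto_pi_nhds.mpr htend
    have hφt : Filter.Tendsto (fun n => φ (pn n)) Filter.atTop (nhds (φ p)) :=
      (hcont p hp).tendsto.comp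
        (tendsto_nhdsWithin_of_tendsto_nhds_of_eventually_within pn htendp
          (Filter.Eventually.of_forall hpn))
    have h1 : Filter.Tendsto (fun n => φ (pn n) (ω, θ)) Filter.atTop (nhds (φ p (ω, θ))) :=
      (tendsto_pi_nhds.mp hφt) (ω, θ)
    have hZt : Filter.Tendsto (fun n => ∑ x : Ω × Θ, ψ x.1 * pn n x) Filter.atTop
        (nhds (∑ x : Ω × Θ, ψ x.1 * p x)) := by
      apply tendsto_finset_sum
      intro x _
      exact (htend x).const_mul _
    have h2 : Filter.Tendsto (fun n => ψ ω * pn n (ω, θ) / ∑ x : Ω × Θ, ψ x.1 * pn n x)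
        Filter.atTop (nhds (ψ ω * p (ω, θ) / ∑ x : Ω × Θ, ψ x.1 * p x)) :=
      Filter.Tendsto.div ((htend (ω, θ)).const_mul _) hZt (ne_of_gt (hZpos p hp))
    exact tendsto_nhds_unique (h1.congr fun n => hfn n ω θ) h2
  have htt : Filter.Tendsto (fun n : ℕ => 1 / ((n:ℝ) + 1)) Filter.atTop (nhds 0) :=
    tendsto_one_div_add_atTop_nhds_zero_nat
  -- step 2: positive signal marginals
  have step2 : ∀ p : Ω × Θ → ℝ, IsDist p → (∀ θ' : Θ, 0 < ∑ ω', p (ω', θ')) →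
      ∀ (ω : Ω) (θ : Θ), φ p (ω, θ) = ψ ω * p (ω, θ) / ∑ x : Ω × Θ, ψ x.1 * p x := by
    intro p hp hS
    set Q : Matrix Θ Θ ℝ := fun θ' θ'' => p (ι θ', θ'') / ∑ ω'', p (ω'', θ'') with hQdef
    have hex : ∀ n : ℕ, ∃ t : ℝ, 0 < t ∧ t < 1/((n:ℝ)+1) ∧
        ((1 - t) • Q + t • (1 : Matrix Θ Θ ℝ)).det ≠ 0 :=
      fun n => exists_good_t Q (by positivity)
    choose t ht0 ht1 hdet using hex
    have htlt1 : ∀ n, t n < 1 := by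
      intro n
      refine lt_of_lt_of_le (ht1 n) ?_
      rw [div_le_one (by positivity)]
      linarith [Nat.cast_nonneg (α := ℝ) n]
    set pn : ℕ → Ω × Θ → ℝ := fun n x => (1 - t n) * p x
      + t n * ((∑ ω'', p (ω'', x.2)) * (if x.1 = ι x.2 then 1 else 0)) with hpndef
    have hpnS : ∀ (n : ℕ) (θ' : Θ), ∑ ω', pn n (ω', θ') = ∑ ω', p (ω', θ') := by
      intro n θ'
      simp only [hpndef]
      rw [Finset.sum_add_distrib, ← Finset.mul_sum, ← Finset.mul_sum, ← Finset.mul_sum]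
      rw [sum_ite1 (ι θ') (1:ℝ)]
      ring
    have hpnd : ∀ n, IsDist (pn n) := by
      intro n
      constructor
      · intro x
        have h1 : 0 ≤ (1 - t n) * p x := mul_nonneg (by linarith [htlt1 n]) (hp.1 x)
        have h2 : 0 ≤ (∑ ω'', p (ω'', x.2)) * (if x.1 = ι x.2 then 1 else 0) :=
          mul_nonneg (le_of_lt (hS x.2)) (by split <;> norm_num)
        have h3 : 0 ≤ t n * ((∑ ω'', p (ω'', x.2)) * (if x.1 = ι x.2 then 1 else 0)) :=
          mul_nonneg (le_of_lt (ht0 n)) h2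
        simp only [hpndef]
        linarith
      · rw [Fintype.sum_prod_type, Finset.sum_comm]
        rw [Finset.sum_congr rfl fun θ' _ => hpnS n θ']
        rw [← Finset.sum_comm, ← Fintype.sum_prod_type]
        exact hp.2
    have hindn : ∀ n, ∀ lam : Θ → ℝ,
        (∀ ω' : Ω, ∑ θ', lam θ' * (pn n (ω', θ') / ∑ ω'', pn n (ω'', θ')) = 0) →
        ∀ θ', lam θ' = 0 := by
      intro n lam hlam
      have hmv : ((1 - t n) • Q + t n • (1 : Matrix Θ Θ ℝ)).mulVec lam = 0 := by
        funext θ'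
        have h := hlam (ι θ')
        simp only [Matrix.mulVec, dotProduct, Matrix.add_apply, Matrix.smul_apply,
          Matrix.one_apply, smul_eq_mul, Pi.zero_apply]
        refine Eq.trans ?_ h
        apply Finset.sum_congr rfl
        intro θ'' _
        rw [hpnS n θ'']
        have hSne := ne_of_gt (hS θ'')
        simp only [hpndef, hQdef]
        by_cases hee : θ' = θ''
        · subst hee
          simp only [if_pos rfl]
          field_simp [ne_of_gt (hS θ')]
        · have hιne : ¬(ι θ' = ι θ'') := fun hc => hee (ι.injective hc)
          simp only [if_neg hιne, if_neg hee]
          field_simp [ne_of_gt (hS θ'')]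
          try ring
      have hz := Matrix.eq_zero_of_mulVec_eq_zero (hdet n) hmv
      intro θ'
      rw [hz]
      rfl
    have hfn : ∀ (n : ℕ) (ω : Ω) (θ : Θ), φ (pn n) (ω, θ)
        = ψ ω * pn n (ω, θ) / ∑ x : Ω × Θ, ψ x.1 * pn n x := by
      intro n ω θ
      exact exact_formula hmap hpos hcoh hmarg θ0 hψpos hψF (hpnd n)
        (fun θ' => by rw [hpnS n θ']; exact hS θ') (hZpos _ (hpnd n)) (hindn n) ω θ
    have httn : Filter.Tendsto t Filter.atTop (nhds 0) :=
      squeeze_zero (fun n => le_of_lt (ht0 n)) (fun n => le_of_lt (ht1 n)) htt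
    have htend : ∀ x, Filter.Tendsto (fun n => pn n x) Filter.atTop (nhds (p x)) := by
      intro x
      simp only [hpndef]
      have h1 : Filter.Tendsto (fun n => (1 - t n) * p x
          + t n * ((∑ ω'', p (ω'', x.2)) * (if x.1 = ι x.2 then 1 else 0)))
          Filter.atTop (nhds ((1 - 0) * p x
          + 0 * ((∑ ω'', p (ω'', x.2)) * (if x.1 = ι x.2 then 1 else 0)))) := by
        exact ((tendsto_const_nhds.sub httn).mul tendsto_const_nhds).add
          (httn.mul tendsto_const_nhds)
      simpa using h1
    exact limit p hp pn hpnd htend hfn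
  -- step 3: general distributions
  intro p hp ω θ
  have hNΩ : (0:ℝ) < (Fintype.card Ω : ℝ) := by
    have : 0 < Fintype.card Ω := by omega
    exact_mod_cast this
  have hNΘ : (0:ℝ) < (Fintype.card Θ : ℝ) := by
    have : 0 < Fintype.card Θ := by omega
    exact_mod_cast this
  set u0 : ℝ := 1 / ((Fintype.card Ω : ℝ) * (Fintype.card Θ : ℝ)) with hu0def
  have hu0 : 0 < u0 := by rw [hu0def]; positivity
  set pn : ℕ → Ω × Θ → ℝ := fun n x => (1 - 1/((n:ℝ)+1)) * p x + (1/((n:ℝ)+1)) * u0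
    with hpndef
  have he0 : ∀ n : ℕ, 0 < 1/((n:ℝ)+1) := fun n => by positivity
  have he1 : ∀ n : ℕ, 1/((n:ℝ)+1) ≤ 1 := by
    intro n
    rw [div_le_one (by positivity)]
    linarith [Nat.cast_nonneg (α := ℝ) n]
  have hpnd : ∀ n, IsDist (pn n) := by
    intro n
    constructor
    · intro x
      have h1 : 0 ≤ (1 - 1/((n:ℝ)+1)) * p x := mul_nonneg (by linarith [he1 n]) (hp.1 x)
      have h2 : 0 ≤ (1/((n:ℝ)+1)) * u0 := le_of_lt (mul_pos (he0 n) hu0)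
      simp only [hpndef]
      linarith
    · simp only [hpndef]
      rw [Finset.sum_add_distrib, ← Finset.mul_sum, hp.2, Finset.sum_const,
        Finset.card_univ, Fintype.card_prod, nsmul_eq_mul, hu0def]
      push_cast
      field_simp
      ring
  have hpnS : ∀ (n : ℕ) (θ' : Θ), 0 < ∑ ω', pn n (ω', θ') := by
    intro n θ'
    simp only [hpndef]
    rw [Finset.sum_add_distrib, ← Finset.mul_sum, Finset.sum_const, Finset.card_univ,
      nsmul_eq_mul]
    have h1 : 0 ≤ (1 - 1/((n:ℝ)+1)) * ∑ ω', p (ω', θ') :=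
      mul_nonneg (by linarith [he1 n]) (Finset.sum_nonneg fun ω' _ => hp.1 _)
    have h2 : 0 < (Fintype.card Ω : ℝ) * ((1/((n:ℝ)+1)) * u0) :=
      mul_pos hNΩ (mul_pos (he0 n) hu0)
    linarith
  have htend : ∀ x, Filter.Tendsto (fun n => pn n x) Filter.atTop (nhds (p x)) := by
    intro x
    simp only [hpndef]
    have h1 : Filter.Tendsto (fun n : ℕ => (1 - 1/((n:ℝ)+1)) * p x + (1/((n:ℝ)+1)) * u0)
        Filter.atTop (nhds ((1 - 0) * p x + 0 * u0)) :=
      ((tendsto_const_nhds.sub htt).mul tendsto_const_nhds).add (htt.mul tendsto_const_nhds)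
    simpa using h1
  exact limit p hp pn hpnd htend (fun n ω' θ' => step2 (pn n) (hpnd n) (hpnS n) ω' θ') ω θ
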